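/- Let α ≥ 0 and let (γ_j) be a real sequence with ∑_j |γ_j| < ∞ and 1 + α/j + γ_j > 0 for all j. Then as k, n → ∞ with k ≤ n, the product ∏_{j=k}^{n} (1 + α/j + γ_j) is asymptotically equivalent to (n/k)^α, i.e. the ratio of the product to (n/k)^α tends to 1. -/

import Mathlib

set_option maxHeartbeats 1000000

open Finset Real

lemma mylog_bound (x : ℝ) (hx : |x| ≤ 1/2) : |Real.log (1+x) - x| ≤ 2*x^2 := by
  have h1 : |(-x)| < 1 := by rw [abs_neg]; linarith [abs_nonneg x]
  have key := Real.abs_log_sub_add_sum_range_le h1 1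
  simp only [Finset.range_one, Finset.sum_singleton] at key
  have e : (1 : ℝ) - (-x) = 1 + x := by ring
  rw [e] at key
  have h2 : |(-x)| ^ (1+1) / (1 - |(-x)|) ≤ 2 * x^2 := by
    rw [abs_neg, div_le_iff₀ (by linarith [abs_nonneg x])]
    have hs : |x|^(1+1) = x^2 := by rw [show (1+1)=2 from rfl, sq_abs]
    nlinarith [abs_nonneg x, sq_nonneg x, sq_nonneg (x*x)]
  have h3 : Real.log (1+x) - x = (-x)^(0+1)/((0:ℕ)+1) + Real.log (1+x) := by
    push_cast; ring
  rw [h3]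
  exact key.trans h2

lemma mylog_ratio_le (a : ℝ) (ha : 0 < a) : Real.log (a+1) - Real.log a ≤ 1/a := by
  have h := Real.log_le_sub_one_of_pos (show (0:ℝ) < (a+1)/a by positivity)
  rw [Real.log_div (by positivity) (ne_of_gt ha)] at h
  have e : (a+1)/a - 1 = 1/a := by field_simp; ring
  linarith

lemma myle_log_ratio (a : ℝ) (ha : 0 < a) : 1/(a+1) ≤ Real.log (a+1) - Real.log a := by
  have h := Real.log_le_sub_one_of_pos (show (0:ℝ) < a/(a+1) by positivity)
  rw [Real.log_div (ne_of_gt ha) (by positivity)] at h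
  have e : a/(a+1) - 1 = -(1/(a+1)) := by field_simp; ring
  linarith

lemma mysum_inv_lower (k n : ℕ) (hk : 1 ≤ k) (hkn : k ≤ n) :
    Real.log n - Real.log k ≤ ∑ j ∈ Icc k n, (1:ℝ)/j := by
  have hk0 : (0:ℝ) < k := by exact_mod_cast hk
  have main : Real.log ((n:ℝ)+1) - Real.log k ≤ ∑ j ∈ Icc k n, (1:ℝ)/j := by
    induction n, hkn using Nat.le_induction with
    | base =>
        rw [Finset.Icc_self, Finset.sum_singleton]
        linarith [mylog_ratio_le (k:ℝ) hk0]
    | succ m hm ih =>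
        rw [Finset.sum_Icc_succ_top (by omega)]
        have h2 := mylog_ratio_le ((m:ℝ)+1) (by positivity)
        push_cast
        push_cast at ih h2
        linarith
  have hn0 : (0:ℝ) < n := by
    have hn' : 1 ≤ n := le_trans hk hkn
    exact_mod_cast hn'
  have hmono : Real.log n ≤ Real.log ((n:ℝ)+1) := Real.log_le_log hn0 (by linarith)
  linarith

lemma mysum_inv_upper (k n : ℕ) (hk : 1 ≤ k) (hkn : k ≤ n) :
    ∑ j ∈ Icc k n, (1:ℝ)/j ≤ Real.log n - Real.log k + 1/k := by
  have hk0 : (0:ℝ) < k := by exact_mod_cast hk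
  induction n, hkn using Nat.le_induction with
  | base =>
      rw [Finset.Icc_self, Finset.sum_singleton]
      simp
  | succ m hm ih =>
      rw [Finset.sum_Icc_succ_top (by omega)]
      have hm0 : (0:ℝ) < m := by exact_mod_cast lt_of_lt_of_le Nat.zero_lt_one (le_trans hk hm)
      have h2 := myle_log_ratio (m:ℝ) hm0
      push_cast
      push_cast at ih h2
      linarith

lemma mysum_inv_sq (k n : ℕ) (hk : 2 ≤ k) (hkn : k ≤ n) :
    ∑ j ∈ Icc k n, (1:ℝ)/(j:ℝ)^2 ≤ 1/((k:ℝ)-1) := by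
  have hk0 : (2:ℝ) ≤ k := by exact_mod_cast hk
  have main : ∑ j ∈ Icc k n, (1:ℝ)/(j:ℝ)^2 ≤ 1/((k:ℝ)-1) - 1/n := by
    induction n, hkn using Nat.le_induction with
    | base =>
        rw [Finset.Icc_self, Finset.sum_singleton]
        have h1 : (0:ℝ) < (k:ℝ)-1 := by linarith
        have h2 : 1/((k:ℝ)-1) - 1/k = 1/(((k:ℝ)-1)*k) := by field_simp; ring
        rw [h2]
        apply one_div_le_one_div_of_le (by nlinarith)
        nlinarith
    | succ m hm ih =>
        rw [Finset.sum_Icc_succ_top (by omega)]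
        have hm0 : (2:ℝ) ≤ m := le_trans hk0 (by exact_mod_cast hm)
        have h2 : (1:ℝ)/((m:ℝ)+1)^2 ≤ 1/m - 1/((m:ℝ)+1) := by
          have h3 : 1/(m:ℝ) - 1/((m:ℝ)+1) = 1/((m:ℝ)*((m:ℝ)+1)) := by
            field_simp; ring
          rw [h3]
          apply one_div_le_one_div_of_le (by nlinarith)
          nlinarith
        push_cast
        push_cast at ih h2
        linarith
  have hn0 : (0:ℝ) < n := by
    have : (2:ℝ) ≤ n := le_trans hk0 (by exact_mod_cast hkn)
    linarith
  have : (0:ℝ) < 1/(n:ℝ) := by positivity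
  linarith

theorem prod_asymp_main (α : ℝ) (hα : 0 ≤ α) (γ : ℕ → ℝ)
    (hsum : Summable fun j => |γ j|)
    (hpos : ∀ j : ℕ, 1 ≤ j → 0 < 1 + α / (j : ℝ) + γ j)
    (mylog_bound : ∀ x : ℝ, |x| ≤ 1/2 → |Real.log (1+x) - x| ≤ 2*x^2)
    (mysum_inv_lower : ∀ k n : ℕ, 1 ≤ k → k ≤ n →
      Real.log n - Real.log k ≤ ∑ j ∈ Icc k n, (1:ℝ)/j)
    (mysum_inv_upper : ∀ k n : ℕ, 1 ≤ k → k ≤ n →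
      ∑ j ∈ Icc k n, (1:ℝ)/j ≤ Real.log n - Real.log k + 1/k)
    (mysum_inv_sq : ∀ k n : ℕ, 2 ≤ k → k ≤ n →
      ∑ j ∈ Icc k n, (1:ℝ)/(j:ℝ)^2 ≤ 1/((k:ℝ)-1)) :
    ∀ ε : ℝ, 0 < ε → ∃ K : ℕ, 1 ≤ K ∧ ∀ k n : ℕ, K ≤ k → k ≤ n →
      1 - ε ≤ (∏ j ∈ Finset.Icc k n, (1 + α / (j : ℝ) + γ j)) / ((n : ℝ) / (k : ℝ)) ^ α ∧
      (∏ j ∈ Finset.Icc k n, (1 + α / (j : ℝ) + γ j)) / ((n : ℝ) / (k : ℝ)) ^ α ≤ 1 + ε := by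
  intro ε hε
  set δ := Real.log (1+ε) with hδdef
  have hδpos : 0 < δ := Real.log_pos (by linarith)
  have hδε : δ ≤ ε := by
    have := Real.log_le_sub_one_of_pos (show (0:ℝ) < 1+ε by linarith)
    linarith
  -- tail bound on |γ|
  obtain ⟨s, hs⟩ := summable_iff_vanishing.mp hsum (Set.Iio (δ/4))
      (Iio_mem_nhds (by linarith))
  set K₁ : ℕ := s.sup id + 1 with hK₁
  have htail : ∀ k n : ℕ, K₁ ≤ k → ∑ j ∈ Finset.Icc k n, |γ j| < δ/4 := by
    intro k n hkk
    have hdisj : Disjoint (Finset.Icc k n) s := by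
      rw [Finset.disjoint_left]
      intro j hj hjs
      have h1 : j ≤ s.sup id := Finset.le_sup (f := id) hjs
      have h2 : k ≤ j := (Finset.mem_Icc.mp hj).1
      omega
    exact hs _ hdisj
  -- smallness of γ
  have hγ0 : Filter.Tendsto (fun j => |γ j|) Filter.atTop (nhds 0) :=
    hsum.tendsto_atTop_zero
  obtain ⟨K₂, hK₂⟩ := Filter.eventually_atTop.mp
    (hγ0.eventually (gt_mem_nhds (show (0:ℝ) < 1/4 by norm_num)))
  -- K₃ : large enough for the α-terms
  obtain ⟨K₃, hK₃⟩ := exists_nat_gt (4*α + 16*α^2/δ + 4*α/δ + 2)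
  have ht1 : (0:ℝ) ≤ 16*α^2/δ := by positivity
  have ht2 : (0:ℝ) ≤ 4*α/δ := by positivity
  have hK₃R : (2:ℝ) < (K₃:ℝ) := by nlinarith
  have hK₃3 : 3 ≤ K₃ := by exact_mod_cast hK₃R
  refine ⟨max (max K₁ K₂) K₃, le_trans (by omega) (le_max_right _ _), ?_⟩
  intro k n hKk hkn
  have hkK₁ : K₁ ≤ k := le_trans (le_trans (le_max_left _ _) (le_max_left _ _)) hKk
  have hkK₂ : K₂ ≤ k := le_trans (le_trans (le_max_right _ _) (le_max_left _ _)) hKk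
  have hkK₃ : K₃ ≤ k := le_trans (le_max_right _ _) hKk
  have hk2 : 2 ≤ k := by omega
  have hk1 : 1 ≤ k := by omega
  have hn1 : 1 ≤ n := le_trans hk1 hkn
  have hkR : (0:ℝ) < k := by exact_mod_cast hk1
  have hnR : (0:ℝ) < n := by exact_mod_cast hn1
  have hkb : 4*α + 16*α^2/δ + 4*α/δ + 2 < (k:ℝ) :=
    lt_of_lt_of_le hK₃ (by exact_mod_cast hkK₃)
  -- per-j facts
  have hjfacts : ∀ j ∈ Finset.Icc k n, (0:ℝ) < j ∧ 0 < 1 + α/(j:ℝ) + γ j ∧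
      |α/(j:ℝ) + γ j| ≤ 1/2 ∧ |γ j| ≤ 1/4 := by
    intro j hj
    obtain ⟨hjk, hjn⟩ := Finset.mem_Icc.mp hj
    have hj1 : 1 ≤ j := le_trans hk1 hjk
    have hjR : (0:ℝ) < j := by exact_mod_cast hj1
    have hjkR : (k:ℝ) ≤ j := by exact_mod_cast hjk
    have hγj : |γ j| ≤ 1/4 := le_of_lt (hK₂ j (le_trans hkK₂ hjk))
    have hαj : α/(j:ℝ) ≤ 1/4 := by
      rw [div_le_iff₀ hjR]
      nlinarith
    have hαj0 : 0 ≤ α/(j:ℝ) := by positivity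
    refine ⟨hjR, hpos j hj1, ?_, hγj⟩
    calc |α/(j:ℝ) + γ j| ≤ |α/(j:ℝ)| + |γ j| := abs_add_le _ _
      _ ≤ 1/2 := by rw [abs_of_nonneg hαj0]; linarith
  have hP : 0 < ∏ j ∈ Finset.Icc k n, (1 + α/(j:ℝ) + γ j) :=
    Finset.prod_pos (fun j hj => (hjfacts j hj).2.1)
  set S := ∑ j ∈ Finset.Icc k n, Real.log (1 + α/(j:ℝ) + γ j) with hSdef
  set L := S - α * (Real.log n - Real.log k) with hLdef
  -- ratio = exp L
  have hratio : (∏ j ∈ Finset.Icc k n, (1 + α/(j:ℝ) + γ j)) / ((n:ℝ)/(k:ℝ))^α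
      = Real.exp L := by
    have h1 : ((n:ℝ)/(k:ℝ))^α = Real.exp (Real.log ((n:ℝ)/(k:ℝ)) * α) :=
      Real.rpow_def_of_pos (by positivity) α
    rw [h1, ← Real.exp_log hP, ← Real.exp_sub]
    congr 1
    rw [Real.log_prod (fun j hj => ne_of_gt (hjfacts j hj).2.1),
      Real.log_div (ne_of_gt hnR) (ne_of_gt hkR)]
    rw [hLdef, hSdef]
    ring
  -- decompose S
  set A := ∑ j ∈ Finset.Icc k n, (Real.log (1 + α/(j:ℝ) + γ j) - (α/(j:ℝ) + γ j)) with hAdef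
  have hS : S = A + (∑ j ∈ Finset.Icc k n, α/(j:ℝ)) + (∑ j ∈ Finset.Icc k n, γ j) := by
    rw [hSdef, hAdef, ← Finset.sum_add_distrib, ← Finset.sum_add_distrib]
    exact Finset.sum_congr rfl (fun j _ => by ring)
  -- bound A
  have hA : |A| ≤ 4*α^2 * (1/((k:ℝ)-1)) + δ/4 := by
    have step1 : |A| ≤ ∑ j ∈ Finset.Icc k n,
        (4*α^2 * ((1:ℝ)/(j:ℝ)^2) + |γ j|) := by
      refine le_trans (Finset.abs_sum_le_sum_abs _ _) (Finset.sum_le_sum ?_)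
      intro j hj
      obtain ⟨hjR, hfj, hxj, hγj⟩ := hjfacts j hj
      have hb := mylog_bound (α/(j:ℝ) + γ j) hxj
      have he : 1 + (α/(j:ℝ) + γ j) = 1 + α/(j:ℝ) + γ j := by ring
      rw [he] at hb
      have hsq : (α/(j:ℝ))^2 = α^2 * (1/(j:ℝ)^2) := by
        rw [div_pow, mul_one_div]
      have h1 : 2*(α/(j:ℝ) + γ j)^2 ≤ 4*(α/(j:ℝ))^2 + 4*(γ j)^2 := by
        nlinarith [sq_nonneg (α/(j:ℝ) - γ j)]
      have h2 : 4*(γ j)^2 ≤ |γ j| := by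
        nlinarith [sq_abs (γ j), abs_nonneg (γ j)]
      have h3 : 4*(α/(j:ℝ))^2 = 4*α^2 * (1/(j:ℝ)^2) := by rw [hsq]; ring
      linarith
    rw [Finset.sum_add_distrib, ← Finset.mul_sum] at step1
    have h2 := mysum_inv_sq k n hk2 hkn
    have h3 := htail k n hkK₁
    nlinarith [sq_nonneg α]
  -- bound the α/j sum
  have hBl : Real.log n - Real.log k ≤ ∑ j ∈ Finset.Icc k n, (1:ℝ)/j :=
    mysum_inv_lower k n hk1 hkn
  have hBu : ∑ j ∈ Finset.Icc k n, (1:ℝ)/j ≤ Real.log n - Real.log k + 1/k :=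
    mysum_inv_upper k n hk1 hkn
  have hBeq : ∑ j ∈ Finset.Icc k n, α/(j:ℝ) = α * ∑ j ∈ Finset.Icc k n, (1:ℝ)/j := by
    rw [Finset.mul_sum]
    exact Finset.sum_congr rfl (fun j _ => by rw [mul_one_div])
  -- bound C
  have hC : |∑ j ∈ Finset.Icc k n, γ j| ≤ δ/4 := by
    refine le_trans (Finset.abs_sum_le_sum_abs _ _) (le_of_lt (htail k n hkK₁))
  -- numeric bounds from hkb
  have hα4 : 4*α^2 * (1/((k:ℝ)-1)) ≤ δ/4 := by
    have hk1R : (0:ℝ) < (k:ℝ) - 1 := by linarith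
    rw [mul_one_div, div_le_iff₀ hk1R]
    have h5 : 16*α^2/δ < (k:ℝ) - 1 := by linarith
    have h6 : 16*α^2 < δ * ((k:ℝ)-1) := by
      have := (div_lt_iff₀ hδpos).mp h5
      linarith
    linarith
  have hαk : α * (1/(k:ℝ)) ≤ δ/4 := by
    rw [mul_one_div, div_le_iff₀ hkR]
    have h6 : 4*α < δ * (k:ℝ) := by
      have := (div_lt_iff₀ hδpos).mp (show 4*α/δ < (k:ℝ) by linarith)
      linarith
    linarith
  -- final bound on |L|
  have hL : |L| ≤ δ := by
    rw [abs_le]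
    obtain ⟨hA1, hA2⟩ := abs_le.mp hA
    obtain ⟨hC1, hC2⟩ := abs_le.mp hC
    have hB1 : α * (Real.log n - Real.log k) ≤ α * ∑ j ∈ Finset.Icc k n, (1:ℝ)/j :=
      mul_le_mul_of_nonneg_left hBl hα
    have hB2 : α * ∑ j ∈ Finset.Icc k n, (1:ℝ)/j
        ≤ α * (Real.log n - Real.log k) + α * (1/(k:ℝ)) := by
      have := mul_le_mul_of_nonneg_left hBu hα
      calc α * ∑ j ∈ Finset.Icc k n, (1:ℝ)/j
          ≤ α * (Real.log n - Real.log k + 1/k) := this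
        _ = α * (Real.log n - Real.log k) + α * (1/(k:ℝ)) := by ring
    constructor
    · rw [hLdef, hS, hBeq]; linarith
    · rw [hLdef, hS, hBeq]; linarith
  rw [hratio]
  constructor
  · have h3 : Real.exp (-δ) ≤ Real.exp L := Real.exp_le_exp.mpr (neg_le_of_abs_le hL)
    linarith [Real.add_one_le_exp (-δ)]
  · calc Real.exp L ≤ Real.exp δ := Real.exp_le_exp.mpr (le_of_abs_le hL)
      _ = 1+ε := Real.exp_log (by linarith)

/-- Let α ≥ 0 and (γ_j) with ∑ |γ_j| < ∞ and 1 + α/j + γ_j > 0.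
Then ∏_{j=k}^{n} (1 + α/j + γ_j) ∼ (n/k)^α as k, n → ∞ with k ≤ n. -/
theorem prod_asymp (α : ℝ) (hα : 0 ≤ α) (γ : ℕ → ℝ)
    (hsum : Summable fun j => |γ j|)
    (hpos : ∀ j : ℕ, 1 ≤ j → 0 < 1 + α / (j : ℝ) + γ j) :
    ∀ ε : ℝ, 0 < ε → ∃ K : ℕ, 1 ≤ K ∧ ∀ k n : ℕ, K ≤ k → k ≤ n →
      1 - ε ≤ (∏ j ∈ Finset.Icc k n, (1 + α / (j : ℝ) + γ j)) / ((n : ℝ) / (k : ℝ)) ^ α ∧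
      (∏ j ∈ Finset.Icc k n, (1 + α / (j : ℝ) + γ j)) / ((n : ℝ) / (k : ℝ)) ^ α ≤ 1 + ε := by
  exact prod_asymp_main α hα γ hsum hpos mylog_bound mysum_inv_lower mysum_inv_upper mysum_inv_sq
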